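/- Let k₁ ≥ k₂ ≥ 1 be real numbers and let k₁₂ be a real number such that k₁₂ - k₁ - k₂ is a nonnegative integer. Then the limit lim_{t → 1⁻} (1-t)^{1-2k₁} · ₂F₁(k₁₂-k₁+k₂, 1-k₁₂-k₁+k₂; 2k₂; t) exists and equals the (finite) value of the terminating series ₂F₁(k₁+k₂-k₁₂, k₁+k₂+k₁₂-1; 2k₂; 1). In particular ₂F₁(k₁₂-k₁+k₂, -k₁₂-k₁+k₂+1; 2k₂; t) behaves like a constant times (1-t)^{2k₁-1} as t → 1⁻. -/

import Mathlib

open Complex Filter Set MeasureTheory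

/-- The `n`-th term of the Gauss hypergeometric series `₂F₁(a,b;c;z)`. -/
noncomputable def hypTerm (a b c z : ℂ) (n : ℕ) : ℂ :=
  (ascPochhammer ℂ n).eval a * (ascPochhammer ℂ n).eval b /
    ((ascPochhammer ℂ n).eval c * (n.factorial : ℂ)) * z ^ n

/-- The Gauss hypergeometric function `₂F₁(a,b;c;z)`. -/
noncomputable def hyp (a b c z : ℂ) : ℂ := ∑' n, hypTerm a b c z n

namespace HypAux


noncomputable def pE (x : ℂ) (n : ℕ) : ℂ := (ascPochhammer ℂ n).eval x

lemma pE_zero (x : ℂ) : pE x 0 = 1 := by simp [pE, ascPochhammer_zero]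

lemma pE_succ (x : ℂ) (n : ℕ) : pE x (n+1) = pE x n * (x + n) := by
  simp [pE, ascPochhammer_succ_eval]

noncomputable def Bc (a b c : ℂ) (i : ℕ) : ℂ :=
  pE a i * pE b i / (pE c i * (i.factorial : ℂ))

noncomputable def Cc (w : ℂ) (j : ℕ) : ℂ := pE w j / (j.factorial : ℂ)

lemma Cc_zero (w : ℂ) : Cc w 0 = 1 := by simp [Cc, pE_zero]

lemma Bc_zero (a b c : ℂ) : Bc a b c 0 = 1 := by simp [Bc, pE_zero]

lemma pE_ne_zero {c : ℂ} (hc : ∀ i : ℕ, c + (i : ℂ) ≠ 0) (i : ℕ) : pE c i ≠ 0 := by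
  induction i with
  | zero => simp [pE_zero]
  | succ n ih => rw [pE_succ]; exact mul_ne_zero ih (hc n)

lemma Cc_succ (w : ℂ) (j : ℕ) : Cc w (j+1) = Cc w j * ((w + j) / ((j : ℂ) + 1)) := by
  rw [Cc, Cc, pE_succ, Nat.factorial_succ]
  push_cast
  rw [mul_comm ((j:ℂ)+1) _]
  field_simp

lemma Bc_succ {c : ℂ} (a b : ℂ) (hc : ∀ i : ℕ, c + (i : ℂ) ≠ 0) (i : ℕ) :
    Bc a b c (i+1) = Bc a b c i * ((a + i) * (b + i) / (((i : ℂ) + 1) * (c + i))) := by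
  rw [Bc, Bc, pE_succ, pE_succ, pE_succ, Nat.factorial_succ]
  have h1 : pE c i ≠ 0 := pE_ne_zero hc i
  have h2 : (i.factorial : ℂ) ≠ 0 := by exact_mod_cast Nat.cast_ne_zero.2 i.factorial_ne_zero
  have h3 : ((i : ℂ) + 1) ≠ 0 := Nat.cast_add_one_ne_zero i
  have h4 : c + (i : ℂ) ≠ 0 := hc i
  push_cast
  field_simp

/-- The Euler-transformation coefficient identity (Pfaff–Saalschütz type). -/
lemma key (a b c : ℂ) (hc : ∀ i : ℕ, c + (i : ℂ) ≠ 0) (m : ℕ) :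
    ∑ i ∈ Finset.range (m+1), Bc (c-a) (c-b) c i * Cc (a+b-c) (m-i) = Bc a b c m := by
  induction m with
  | zero => simp [Bc_zero, Cc_zero]
  | succ m ih =>
    let w := a + b - c
    let Bq : ℕ → ℂ := Bc (c-a) (c-b) c
    let Cq : ℕ → ℂ := Cc (a+b-c)
    let G : ℕ → ℂ := fun i => (i : ℂ) * (c + i - 1) * Bq i * Cq (m+1-i)
    have hG : ∀ i, G i = (i : ℂ) * (c + i - 1) * Bc (c-a) (c-b) c i * Cc (a+b-c) (m+1-i) := fun _ => rfl
    show ∑ i ∈ Finset.range (m+1+1), Bc (c-a) (c-b) c i * Cc (a+b-c) (m+1-i) = Bc a b c (m+1)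
    have h3 : ((m : ℂ) + 1) ≠ 0 := Nat.cast_add_one_ne_zero m
    have h4 : c + (m : ℂ) ≠ 0 := hc m
    -- termwise telescoping identity
    have termwise : ∀ i ∈ Finset.range (m+1),
        ((m:ℂ)+1) * (c+m) * (Bc (c-a) (c-b) c i * Cc (a+b-c) (m+1-i)) - (a+m)*(b+m) * (Bc (c-a) (c-b) c i * Cc (a+b-c) (m-i))
          = G i - G (i+1) := by
      intro i hi
      have him : i ≤ m := Nat.lt_succ_iff.mp (Finset.mem_range.mp hi)
      have hmi : m + 1 - i = (m - i) + 1 := by omega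
      have hmi2 : m + 1 - (i + 1) = m - i := by omega
      have hcast : ((m - i : ℕ) : ℂ) = (m : ℂ) - i := by
        push_cast [Nat.cast_sub him]; ring
      have hBsucc := Bc_succ (c-a) (c-b) hc i
      have hCsucc := Cc_succ w (m - i)
      have hmi3 : ((m - i : ℕ) : ℂ) + 1 ≠ 0 := Nat.cast_add_one_ne_zero (m-i)
      have hi3 : ((i : ℂ) + 1) ≠ 0 := Nat.cast_add_one_ne_zero i
      have hi4 : c + (i : ℂ) ≠ 0 := hc i
      rw [hG, hG]
      simp only [hmi, hmi2]
      rw [hCsucc, hBsucc]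
      rw [hcast] at *
      push_cast
      field_simp
      ring
    have tele : ∑ i ∈ Finset.range (m+1), (G i - G (i+1)) = G 0 - G (m+1) :=
      Finset.sum_range_sub' G (m+1)
    have hG0 : G 0 = 0 := by rw [hG]; simp
    have hGm : G (m+1) = ((m:ℂ)+1) * (c+m) * (Bc (c-a) (c-b) c (m+1) * Cc (a+b-c) 0) := by
      rw [hG]
      have : m + 1 - (m+1) = 0 := by omega
      rw [this]
      push_cast
      ring
    have hsum : ∑ i ∈ Finset.range (m+1),
        (((m:ℂ)+1) * (c+m) * (Bc (c-a) (c-b) c i * Cc (a+b-c) (m+1-i)) - (a+m)*(b+m) * (Bc (c-a) (c-b) c i * Cc (a+b-c) (m-i)))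
        = - G (m+1) := by
      rw [Finset.sum_congr rfl termwise, tele, hG0]; ring
    rw [Finset.sum_sub_distrib, ← Finset.mul_sum, ← Finset.mul_sum, ih] at hsum
    -- recurrence for Bc a b c
    have hrec : Bc a b c (m+1) = Bc a b c m * ((a + m) * (b + m) / (((m : ℂ) + 1) * (c + m))) :=
      Bc_succ a b hc m
    have expand : ∑ i ∈ Finset.range (m+1+1), Bc (c-a) (c-b) c i * Cc (a+b-c) (m+1-i)
        = (∑ i ∈ Finset.range (m+1), Bc (c-a) (c-b) c i * Cc (a+b-c) (m+1-i)) + Bc (c-a) (c-b) c (m+1) * Cc (a+b-c) 0 := by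
      rw [Finset.sum_range_succ]; simp
    rw [expand]
    have hne : ((m:ℂ)+1) * (c+m) ≠ 0 := mul_ne_zero h3 h4
    field_simp [hrec] at hsum ⊢
    rw [hGm] at hsum
    rw [hrec, mul_div_assoc', eq_div_iff hne]; linear_combination hsum
  


/-- Ratio-test norm-summability for Pochhammer-type series. -/
lemma summable_norm_poch {𝕜 : Type*} [RCLike 𝕜] (w z : 𝕜) (hz : ‖z‖ < 1) :
    Summable fun j : ℕ => ‖(ascPochhammer 𝕜 j).eval w / (j.factorial : 𝕜) * z ^ j‖ := by
  set f : ℕ → 𝕜 := fun j => (ascPochhammer 𝕜 j).eval w / (j.factorial : 𝕜) * z ^ j with hf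
  set r : ℝ := (1 + ‖z‖) / 2 with hr
  have hr1 : r < 1 := by rw [hr]; linarith
  have hzr : ‖z‖ < r := by rw [hr]; linarith
  have hrz : 0 < r - ‖z‖ := by linarith
  obtain ⟨N, hN⟩ := exists_nat_ge (‖w‖ * ‖z‖ / (r - ‖z‖))
  have key : ∀ j : ℕ, N ≤ j → ‖f (j+1)‖ ≤ r * ‖f j‖ := by
    intro j hj
    have hfac : ((j.factorial : 𝕜)) ≠ 0 := by
      exact_mod_cast Nat.cast_ne_zero.mpr j.factorial_ne_zero
    have hj1 : ((j : 𝕜) + 1) ≠ 0 := Nat.cast_add_one_ne_zero j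
    have hstep : f (j+1) = f j * ((w + j) * z / ((j : 𝕜) + 1)) := by
      rw [hf]
      simp only [ascPochhammer_succ_eval, Nat.factorial_succ, pow_succ]
      push_cast
      field_simp
    have hnorm : ‖f (j+1)‖ = ‖f j‖ * (‖w + (j:𝕜)‖ * ‖z‖ / ((j:ℝ) + 1)) := by
      rw [hstep, norm_mul, norm_div, norm_mul]
      have h2 : ‖((j:𝕜) + 1)‖ = (j:ℝ) + 1 := by
        rw [show ((j : 𝕜) + 1) = ((j+1 : ℕ) : 𝕜) by push_cast; ring, RCLike.norm_natCast]
        push_cast; ring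
      rw [h2, norm_mul]
    rw [hnorm]
    have hwj : ‖w + (j:𝕜)‖ ≤ ‖w‖ + j := by
      calc ‖w + (j:𝕜)‖ ≤ ‖w‖ + ‖(j:𝕜)‖ := norm_add_le _ _
      _ = ‖w‖ + j := by rw [RCLike.norm_natCast]
    have hNj : (N : ℝ) ≤ j := by exact_mod_cast hj
    have hbound : (‖w‖ + j) * ‖z‖ ≤ r * ((j:ℝ) + 1) := by
      have h1 : ‖w‖ * ‖z‖ ≤ (r - ‖z‖) * N := by
        rw [div_le_iff₀ hrz] at hN
        nlinarith [hN, Nat.cast_nonneg (α := ℝ) N]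
      nlinarith [norm_nonneg z, norm_nonneg w, Nat.cast_nonneg (α := ℝ) j]
    have hjpos : (0:ℝ) < (j:ℝ) + 1 := by positivity
    calc ‖f j‖ * (‖w + (j:𝕜)‖ * ‖z‖ / ((j:ℝ) + 1))
        ≤ ‖f j‖ * ((‖w‖ + j) * ‖z‖ / ((j:ℝ) + 1)) := by
          gcongr
      _ ≤ ‖f j‖ * r := by
          apply mul_le_mul_of_nonneg_left _ (norm_nonneg _)
          rw [div_le_iff₀ hjpos]
          linarith [hbound]
      _ = r * ‖f j‖ := mul_comm _ _
  apply summable_of_ratio_norm_eventually_le hr1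
  filter_upwards [eventually_ge_atTop N] with j hj
  rw [norm_norm, norm_norm]
  exact key j hj

noncomputable def qq (w : ℝ) (j : ℕ) : ℝ := (ascPochhammer ℝ j).eval w / (j.factorial : ℝ)

lemma summable_qq (w y : ℝ) (hy : |y| < 1) : Summable (fun j : ℕ => qq w j * y ^ j) := by
  apply Summable.of_norm
  have := summable_norm_poch (𝕜 := ℝ) w y (by rwa [Real.norm_eq_abs])
  exact this

lemma qq_zero (w : ℝ) : qq w 0 = 1 := by simp [qq, ascPochhammer_zero]

lemma qq_rec (w : ℝ) (j : ℕ) : ((j:ℝ)+1) * qq w (j+1) = (w + j) * qq w j := by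
  have hfac : ((j.factorial : ℝ)) ≠ 0 := by
    exact_mod_cast Nat.cast_ne_zero.mpr j.factorial_ne_zero
  have hj1 : ((j : ℝ) + 1) ≠ 0 := Nat.cast_add_one_ne_zero j
  rw [qq, qq, ascPochhammer_succ_eval, Nat.factorial_succ]
  push_cast
  field_simp

/-- The generalized binomial series: `∑ (w)_j/j! x^j = (1-x)^(-w)` for `|x| < 1`. -/
lemma hasSum_binomial (w x : ℝ) (hx : |x| < 1) :
    HasSum (fun j : ℕ => qq w j * x ^ j) ((1 - x) ^ (-w)) := by
  set r : ℝ := (1 + |x|) / 2 with hrdef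
  have hax : 0 ≤ |x| := abs_nonneg x
  have hr1 : r < 1 := by rw [hrdef]; linarith
  have hxr : |x| < r := by rw [hrdef]; linarith
  have hr0 : 0 < r := by rw [hrdef]; linarith
  set t : Set ℝ := Ioo (-r) r with htdef
  have hto : IsOpen t := isOpen_Ioo
  have htc : IsPreconnected t := (convex_Ioo _ _).isPreconnected
  have hmem : ∀ y ∈ t, |y| < r := fun y hy => abs_lt.mpr ⟨hy.1, hy.2⟩
  have h0t : (0:ℝ) ∈ t := ⟨by linarith, hr0⟩
  have hxt : x ∈ t := ⟨(abs_lt.mp hxr).1, (abs_lt.mp hxr).2⟩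
  set u : ℕ → ℝ := fun n => (n:ℝ) * |qq w n| * r ^ (n-1) with hudef
  have hu : Summable u := by
    rw [← summable_nat_add_iff 1]
    have hs : Summable (fun j : ℕ => |w| * ‖(ascPochhammer ℝ j).eval (w+1) / (j.factorial : ℝ) * r ^ j‖) :=
      (summable_norm_poch (𝕜 := ℝ) (w+1) r (by rwa [Real.norm_eq_abs, abs_of_pos hr0])).mul_left _
    apply hs.congr
    intro j
    have : (((j:ℕ)+1:ℕ):ℝ) * qq w (j+1) = (w+j) * qq w j := by exact_mod_cast qq_rec w j
    -- u (j+1) = (j+1) * |qq w (j+1)| * r^j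
    have hposch : (ascPochhammer ℝ (j+1)).eval w = w * (ascPochhammer ℝ j).eval (w+1) := by
      rw [ascPochhammer_succ_left]
      simp [Polynomial.eval_comp]
    rw [hudef]
    simp only [Nat.add_sub_cancel]
    rw [Real.norm_eq_abs, abs_mul, abs_div]
    have h1 : |qq w (j+1)| = |w| * |(ascPochhammer ℝ j).eval (w+1)| / ((j+1:ℕ) * (j.factorial:ℝ)) := by
      rw [qq, hposch, Nat.factorial_succ, abs_div, abs_mul]
      congr 1
      rw [abs_of_pos]
      · push_cast; ring
      · positivity
    rw [h1]
    have hfacp : (0:ℝ) < (j.factorial:ℝ) := by exact_mod_cast j.factorial_pos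
    rw [abs_of_pos (pow_pos hr0 j), abs_of_pos hfacp]
    push_cast
    field_simp
  -- derivative of the sum
  set F : ℝ → ℝ := fun y => ∑' j : ℕ, qq w j * y ^ j with hFdef
  set D : ℝ → ℝ := fun y => ∑' j : ℕ, qq w j * ((j:ℝ) * y ^ (j-1)) with hDdef
  have hbound : ∀ (n : ℕ) (y : ℝ), y ∈ t → ‖qq w n * ((n:ℝ) * y ^ (n-1))‖ ≤ u n := by
    intro n y hy
    rw [Real.norm_eq_abs, abs_mul, abs_mul, hudef]
    have h1 : |y ^ (n-1)| ≤ r ^ (n-1) := by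
      rw [_root_.abs_pow]
      exact pow_le_pow_left₀ (abs_nonneg y) (le_of_lt (hmem y hy)) _
    have h2 : |(n:ℝ)| = (n:ℝ) := abs_of_nonneg (Nat.cast_nonneg n)
    rw [h2]
    calc |qq w n| * ((n:ℝ) * |y ^ (n-1)|) ≤ |qq w n| * ((n:ℝ) * r ^ (n-1)) := by
          gcongr
      _ = (n:ℝ) * |qq w n| * r ^ (n-1) := by ring
  have hderivterm : ∀ (n : ℕ) (y : ℝ),
      y ∈ t → HasDerivAt (fun z : ℝ => qq w n * z ^ n) (qq w n * ((n:ℝ) * y ^ (n-1))) y :=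
    fun n y _ => (hasDerivAt_pow n y).const_mul _
  have hF0 : Summable (fun n : ℕ => qq w n * (0:ℝ) ^ n) := summable_qq w 0 (by simp)
  have hder : ∀ y ∈ t, HasDerivAt F (D y) y := by
    intro y hy
    exact hasDerivAt_tsum_of_isPreconnected hu hto htc hderivterm hbound h0t hF0 hy
  -- the ODE
  have hode : ∀ y ∈ t, (1 - y) * D y = w * F y := by
    intro y hy
    have hyr : |y| < 1 := lt_trans (hmem y hy) hr1
    have hDsummable : Summable (fun n : ℕ => qq w n * ((n:ℝ) * y ^ (n-1))) :=
      Summable.of_norm_bounded hu (fun n => hbound n y hy)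
    have hDsum : HasSum (fun n : ℕ => qq w n * ((n:ℝ) * y ^ (n-1))) (D y) := hDsummable.hasSum
    have hFsum : HasSum (fun j : ℕ => qq w j * y ^ j) (F y) := (summable_qq w y hyr).hasSum
    -- shift the derivative series
    have hshift : HasSum (fun j : ℕ => qq w (j+1) * (((j:ℝ)+1) * y ^ j)) (D y) := by
      have := (hasSum_nat_add_iff' (f := fun n : ℕ => qq w n * ((n:ℝ) * y ^ (n-1))) 1).mpr hDsum
      simp only [Finset.range_one, Finset.sum_singleton, Nat.cast_zero] at this
      simp only [Nat.cast_zero, zero_mul, mul_zero, sub_zero] at this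
      have e : (fun j : ℕ => qq w (j+1) * (((j:ℝ)+1) * y ^ j)) = fun n : ℕ => qq w (n + 1) * (((n + 1 : ℕ) : ℝ) * y ^ (n + 1 - 1)) := by
        funext j; simp
      rw [e]; exact this
    have heq : (fun j : ℕ => qq w (j+1) * (((j:ℝ)+1) * y ^ j))
        = (fun j : ℕ => w * (qq w j * y ^ j) + y * (qq w j * ((j:ℝ) * y ^ (j-1)))) := by
      funext j
      have hrec := qq_rec w j
      have l1 : qq w (j+1) * (((j:ℝ)+1) * y ^ j) = ((w+j) * qq w j) * y ^ j := by
        rw [← hrec]; ring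
      rw [l1]
      cases j with
      | zero => simp
      | succ i =>
        simp only [Nat.add_sub_cancel]
        push_cast
        ring
    rw [heq] at hshift
    have hother : HasSum (fun j : ℕ => w * (qq w j * y ^ j) + y * (qq w j * ((j:ℝ) * y ^ (j-1))))
        (w * F y + y * D y) := (hFsum.mul_left w).add (hDsum.mul_left y)
    have huniq : D y = w * F y + y * D y := hshift.unique hother
    linear_combination huniq
  -- the function H y = F y * (1-y)^w has zero derivative on t
  have hH : ∀ y ∈ t, HasDerivAt (fun z : ℝ => F z * (1 - z) ^ w) 0 y := by
    intro y hy
    have h1y : 0 < 1 - y := by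
      have : y < r := hy.2
      linarith
    have hrpow : HasDerivAt (fun z : ℝ => (1 - z) ^ w) (w * (1-y) ^ (w-1) * (-1)) y := by
      have hbase : HasDerivAt (fun z : ℝ => 1 - z) (-1) y := (hasDerivAt_id y).const_sub 1
      exact (Real.hasDerivAt_rpow_const (Or.inl (ne_of_gt h1y))).comp y hbase
    have := (hder y hy).mul hrpow
    refine HasDerivAt.congr_deriv this ?_
    have hpow : (1-y) ^ w = (1-y) ^ (w-1) * (1-y) := by
      rw [← Real.rpow_add_one (ne_of_gt h1y) (w-1)]
      norm_num
    have hodey := hode y hy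
    rw [hpow]
    linear_combination ((1-y) ^ (w-1)) * hodey
  -- constancy of H and conclusion
  have hHconst : F x * (1 - x) ^ w = F 0 * (1 - 0) ^ w := by
    rcases le_or_gt 0 x with hx0 | hx0
    · have hsub : Icc (0:ℝ) x ⊆ t := by
        intro y hy
        exact ⟨by linarith [hy.1, hr0], lt_of_le_of_lt hy.2 (lt_of_le_of_lt (le_abs_self x) hxr)⟩
      have hcont : ContinuousOn (fun z : ℝ => F z * (1 - z) ^ w) (Icc 0 x) :=
        fun y hy => ((hH y (hsub hy)).continuousAt).continuousWithinAt
      have := constant_of_has_deriv_right_zero hcont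
        (fun y hy => ((hH y (hsub ⟨hy.1, le_of_lt hy.2⟩)).hasDerivWithinAt))
        x (right_mem_Icc.mpr hx0)
      simpa using this
    · have hsub : Icc x (0:ℝ) ⊆ t := by
        intro y hy
        refine ⟨lt_of_lt_of_le ?_ hy.1, by linarith [hy.2, hr0]⟩
        have : -x ≤ |x| := neg_le_abs x
        linarith [hxr]
      have hcont : ContinuousOn (fun z : ℝ => F z * (1 - z) ^ w) (Icc x 0) :=
        fun y hy => ((hH y (hsub hy)).continuousAt).continuousWithinAt
      have := constant_of_has_deriv_right_zero hcont
        (fun y hy => ((hH y (hsub ⟨hy.1, le_of_lt hy.2⟩)).hasDerivWithinAt))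
        0 (right_mem_Icc.mpr (le_of_lt hx0))
      simpa using this.symm
  have hF00 : F 0 = 1 := by
    have : F 0 = ∑' j : ℕ, qq w j * (0:ℝ) ^ j := rfl
    rw [this, tsum_eq_single 0 (by intro j hj; simp [zero_pow hj])]
    simp [qq_zero]
  have h1x : 0 < 1 - x := by
    have : x ≤ |x| := le_abs_self x
    linarith [hx]
  rw [hF00] at hHconst
  norm_num at hHconst
  have hfinal : F x = (1 - x) ^ (-w) := by
    rw [Real.rpow_neg (le_of_lt h1x)]
    have hne : (1-x) ^ w ≠ 0 := (Real.rpow_pos_of_pos h1x w).ne'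
    field_simp
    linarith [hHconst]
  have := (summable_qq w x hx).hasSum
  rwa [show ∑' j : ℕ, qq w j * x ^ j = F x from rfl, hfinal] at this










lemma pE_ofReal (w : ℝ) (j : ℕ) : pE ((w:ℝ) : ℂ) j = (((ascPochhammer ℝ j).eval w : ℝ) : ℂ) := by
  rw [pE, ← ascPochhammer_map (algebraMap ℝ ℂ) j, Polynomial.eval_map]
  exact Polynomial.eval₂_at_apply (algebraMap ℝ ℂ) w

lemma Cc_ofReal_cast (w : ℝ) (j : ℕ) (t : ℝ) :
    Cc ((w : ℂ)) j * ((t:ℂ)) ^ j = (((qq w j * t ^ j : ℝ)) : ℂ) := by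
  rw [Cc, pE_ofReal, qq]
  push_cast
  ring

lemma pE_neg_nat_eq_zero {n i : ℕ} (h : n < i) : pE (-(n:ℂ)) i = 0 := by
  induction i with
  | zero => omega
  | succ m ih =>
    rcases Nat.lt_or_ge n m with hm | hm
    · rw [pE_succ, ih hm, zero_mul]
    · have : n = m := by omega
      subst this
      rw [pE_succ]
      simp

lemma hasSum_binomial_complex (w t : ℝ) (ht : |t| < 1)
    (hbin : HasSum (fun j : ℕ => qq w j * t ^ j) ((1 - t) ^ (-w))) :
    HasSum (fun j : ℕ => Cc ((w:ℂ)) j * ((t:ℂ)) ^ j) ((((1 - t) ^ (-w) : ℝ)) : ℂ) := by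
  have h := hbin.map Complex.ofRealHom Complex.continuous_ofReal
  have heq : (fun j : ℕ => Complex.ofRealHom (qq w j * t ^ j))
      = fun j : ℕ => Cc ((w:ℂ)) j * ((t:ℂ)) ^ j :=
    funext fun j => (Cc_ofReal_cast w j t).symm
  exact heq ▸ h


lemma hypTerm_eq (a b c z : ℂ) (n : ℕ) : hypTerm a b c z n = Bc a b c n * z ^ n := rfl

lemma Bc_eq_zero_of_lt {n i : ℕ} (h : n < i) (a b c : ℂ) (hn : a = -(n:ℂ)) :
    Bc a b c i = 0 := by
  rw [Bc, hn, pE_neg_nat_eq_zero h, zero_mul, zero_div]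

/-- Euler's transformation, in the case where the transformed series terminates. -/
lemma euler (a b c : ℂ) (w : ℝ) (hw : a + b - c = (w:ℂ)) (hc : ∀ i : ℕ, c + (i:ℂ) ≠ 0)
    (n : ℕ) (hn : c - a = -(n:ℂ)) (t : ℝ) (ht : |t| < 1) :
    hyp a b c t = (((1 - t) ^ (-w) : ℝ) : ℂ) * hyp (c-a) (c-b) c t := by
  set f : ℕ → ℂ := fun i => Bc (c-a) (c-b) c i * (t:ℂ) ^ i with hfdef
  set g : ℕ → ℂ := fun j => Cc ((w:ℂ)) j * (t:ℂ) ^ j with hgdef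
  have hsupp : ∀ i ∉ Finset.range (n+1), f i = 0 := by
    intro i hi
    have hni : n < i := by
      simp only [Finset.mem_range] at hi
      omega
    rw [hfdef]
    simp only
    rw [Bc_eq_zero_of_lt hni _ _ _ hn, zero_mul]
  have hf : Summable fun i => ‖f i‖ :=
    summable_of_ne_finset_zero (s := Finset.range (n+1))
      (fun i hi => by rw [hsupp i hi, norm_zero])
  have hg : Summable fun j => ‖g j‖ := by
    have := summable_norm_poch (𝕜 := ℂ) ((w:ℂ)) ((t:ℂ))
      (by rwa [Complex.norm_real, Real.norm_eq_abs])
    exact this.congr fun j => by rw [hgdef]; rfl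
  have hhyp2 : hyp (c-a) (c-b) c t = ∑' i, f i := rfl
  have hbin := hasSum_binomial_complex w t ht (hasSum_binomial w t ht)
  have hgsum : (∑' j, g j) = (((1 - t) ^ (-w) : ℝ) : ℂ) := by
    rw [hgdef]; exact hbin.tsum_eq
  have hcauchy := tsum_mul_tsum_eq_tsum_sum_antidiagonal_of_summable_norm hf hg
  have hterm : ∀ m : ℕ, (∑ kl ∈ Finset.HasAntidiagonal.antidiagonal m, f kl.1 * g kl.2)
      = hypTerm a b c t m := by
    intro m
    rw [Finset.Nat.sum_antidiagonal_eq_sum_range_succ_mk, hypTerm_eq]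
    have : ∀ i ∈ Finset.range (m+1),
        f i * g (m - i) = Bc (c-a) (c-b) c i * Cc ((w:ℂ)) (m-i) * (t:ℂ) ^ m := by
      intro i hi
      have him : i ≤ m := Nat.lt_succ_iff.mp (Finset.mem_range.mp hi)
      rw [hfdef, hgdef]
      have hpow : (t:ℂ) ^ i * (t:ℂ) ^ (m-i) = (t:ℂ) ^ m := by
        rw [← pow_add]
        congr 1
        omega
      calc Bc (c-a) (c-b) c i * (t:ℂ) ^ i * (Cc ((w:ℂ)) (m-i) * (t:ℂ) ^ (m-i))
          = Bc (c-a) (c-b) c i * Cc ((w:ℂ)) (m-i) * ((t:ℂ) ^ i * (t:ℂ) ^ (m-i)) := by ring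
        _ = Bc (c-a) (c-b) c i * Cc ((w:ℂ)) (m-i) * (t:ℂ) ^ m := by rw [hpow]
    rw [Finset.sum_congr rfl this, ← Finset.sum_mul, ← hw]
    rw [key a b c hc m]
  calc hyp a b c t = ∑' m, hypTerm a b c t m := rfl
    _ = ∑' m, ∑ kl ∈ Finset.HasAntidiagonal.antidiagonal m, f kl.1 * g kl.2 := by
        exact (tsum_congr hterm).symm
    _ = (∑' i, f i) * (∑' j, g j) := hcauchy.symm
    _ = (((1 - t) ^ (-w) : ℝ) : ℂ) * hyp (c-a) (c-b) c t := by
        rw [hgsum, hhyp2, mul_comm]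

end HypAux

open HypAux in
/-- For `k₁ ≥ k₂ ≥ 1` and `k₁₂ - k₁ - k₂` a nonnegative integer,
`(1-t)^(1-2k₁) · ₂F₁(k₁₂-k₁+k₂, 1-k₁₂-k₁+k₂; 2k₂; t)` tends, as `t → 1⁻`, to the value
of the terminating series `₂F₁(k₁+k₂-k₁₂, k₁+k₂+k₁₂-1; 2k₂; 1)`; i.e. the hypergeometric
function behaves like a constant times `(1-t)^(2k₁-1)` as `t → 1⁻`. -/
theorem hypergeometric_behaviour_at_one (k₁ k₂ k₁₂ : ℝ)
    (h21 : k₂ ≤ k₁) (h2 : 1 ≤ k₂) (h12 : ∃ n : ℕ, k₁₂ - k₁ - k₂ = n) :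
    Tendsto (fun t : ℝ =>
        (((1 - t) ^ (1 - 2 * k₁) : ℝ) : ℂ) *
          hyp ((k₁₂ : ℂ) - k₁ + k₂) (1 - (k₁₂ : ℂ) - k₁ + k₂) (2 * (k₂ : ℂ)) t)
      (nhdsWithin 1 (Iio 1))
      (nhds (hyp ((k₁ : ℂ) + k₂ - k₁₂) ((k₁ : ℂ) + k₂ + k₁₂ - 1) (2 * (k₂ : ℂ)) 1)) := by
  obtain ⟨n, hn12⟩ := h12
  set a : ℂ := (k₁₂ : ℂ) - k₁ + k₂ with ha
  set b : ℂ := 1 - (k₁₂ : ℂ) - k₁ + k₂ with hb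
  set c : ℂ := 2 * (k₂ : ℂ) with hc
  have hk12 : ((k₁₂ : ℂ)) = (k₁ : ℂ) + k₂ + n := by
    have : k₁₂ = k₁ + k₂ + n := by linarith [hn12]
    exact_mod_cast congrArg (Complex.ofReal) this
  have hcnz : ∀ i : ℕ, c + (i:ℂ) ≠ 0 := by
    intro i h
    have h2' : c + (i:ℂ) = (((2*k₂ + i : ℝ)) : ℂ) := by rw [hc]; push_cast; ring
    rw [h2'] at h
    have := Complex.ofReal_eq_zero.mp h
    have hi : (0:ℝ) ≤ i := Nat.cast_nonneg i
    linarith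
  have hw : a + b - c = (((1 - 2*k₁ : ℝ)) : ℂ) := by
    rw [ha, hb, hc]; push_cast; ring
  have hn : c - a = -(n:ℂ) := by
    rw [hc, ha, hk12]; ring
  have hcb : c - b = (k₁ : ℂ) + k₂ + k₁₂ - 1 := by
    rw [hc, hb]; ring
  have hca : c - a = (k₁ : ℂ) + k₂ - k₁₂ := by
    rw [hc, ha]; ring
  -- the terminating series is a polynomial, hence continuous
  have hfin : ∀ z : ℂ, hyp (c-a) (c-b) c z
      = ∑ i ∈ Finset.range (n+1), Bc (c-a) (c-b) c i * z ^ i := by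
    intro z
    rw [hyp]
    rw [tsum_eq_sum (s := Finset.range (n+1))]
    · exact Finset.sum_congr rfl fun i _ => hypTerm_eq _ _ _ _ _
    · intro i hi
      have hni : n < i := by
        by_contra hcon
        exact hi (Finset.mem_range.mpr (by omega))
      rw [hypTerm_eq, Bc_eq_zero_of_lt hni _ _ _ hn, zero_mul]
  have hcont : Continuous fun t : ℝ =>
      ∑ i ∈ Finset.range (n+1), Bc (c-a) (c-b) c i * ((t:ℂ)) ^ i := by
    apply continuous_finset_sum
    intro i _
    exact continuous_const.mul (Complex.continuous_ofReal.pow i)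
  have hlim : Tendsto (fun t : ℝ => hyp (c-a) (c-b) c t) (nhdsWithin 1 (Iio 1))
      (nhds (hyp (c-a) (c-b) c 1)) := by
    have h1 : Tendsto (fun t : ℝ =>
        ∑ i ∈ Finset.range (n+1), Bc (c-a) (c-b) c i * ((t:ℂ)) ^ i)
        (nhdsWithin 1 (Iio 1))
        (nhds (∑ i ∈ Finset.range (n+1), Bc (c-a) (c-b) c i * ((1:ℂ)) ^ i)) := by
      have := (hcont.tendsto 1).mono_left (nhdsWithin_le_nhds (s := Iio (1:ℝ)))
      simpa using this
    refine Tendsto.congr (fun t => (hfin t).symm) ?_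
    convert h1 using 2
    rw [hfin 1]
  rw [hca, hcb] at hlim
  refine Tendsto.congr' ?_ hlim
  rw [Filter.eventuallyEq_iff_exists_mem]
  refine ⟨Ioo (0:ℝ) 1, Ioo_mem_nhdsLT_of_mem (by constructor <;> norm_num), ?_⟩
  intro t ht
  have ht1 : |t| < 1 := abs_lt.mpr ⟨by linarith [ht.1], ht.2⟩
  have h1t : (0:ℝ) < 1 - t := by linarith [ht.2]
  have heuler := euler a b c (1 - 2*k₁) hw hcnz n hn t ht1
  rw [hca, hcb] at heuler
  calc hyp ((k₁ : ℂ) + k₂ - k₁₂) ((k₁ : ℂ) + k₂ + k₁₂ - 1) c t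
      = (((1 - t) ^ (1 - 2 * k₁) * (1 - t) ^ (-(1 - 2*k₁)) : ℝ) : ℂ)
        * hyp ((k₁ : ℂ) + k₂ - k₁₂) ((k₁ : ℂ) + k₂ + k₁₂ - 1) c t := by
        rw [← Real.rpow_add h1t]
        norm_num
    _ = (((1 - t) ^ (1 - 2 * k₁) : ℝ) : ℂ) * hyp a b c t := by
        rw [heuler]
        push_cast
        ring
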